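/- arXiv:1704.05670 — 4 statements merged into one kernel-verified Lean document; each statement's English description precedes it below -/
import Mathlib

section
/- For every abstract position vector p ∈ ℕ^k satisfying 0 ≤ p(1) ≤ … ≤ p(k) ≤ 2μ and the condition that equal consecutive components are even, there exists a strictly increasing tuple of knots x_0 < t_1 < t_2 < … < t_k < x_{μ+1} whose induced position vector equals p. -/
/-- every abstract position vector (weakly increasing, bounded by 2μ,
with equal consecutive components even) is realized by a strictly increasing tuple
of knots in (x 0, x (μ+1)). -/
theorem stmt2 (μ k : ℕ) (hμ : 1 ≤ μ) (x : ℕ → ℝ) (p : Fin k → ℕ)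
    (hx : ∀ i, i ≤ μ → x i < x (i + 1))
    (hmono : ∀ (j : Fin k) (h : (j : ℕ) + 1 < k), p j ≤ p ⟨(j : ℕ) + 1, h⟩)
    (hub : ∀ j, p j ≤ 2 * μ)
    (heq : ∀ (j : Fin k) (h : (j : ℕ) + 1 < k),
      p j = p ⟨(j : ℕ) + 1, h⟩ → Even (p j)) :
    ∃ t : Fin k → ℝ, StrictMono t ∧ (∀ j, x 0 < t j ∧ t j < x (μ + 1)) ∧
      ∀ j : Fin k,
        (Odd (p j) → t j = x ((p j + 1) / 2)) ∧
        (Even (p j) → x (p j / 2) < t j ∧ t j < x (p j / 2 + 1)) := by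
  -- global monotonicity of p
  have pmono : ∀ i j : ℕ, (hj : j < k) → (hij : i ≤ j) →
      p ⟨i, lt_of_le_of_lt hij hj⟩ ≤ p ⟨j, hj⟩ := by
    intro i j hj hij
    induction j with
    | zero => interval_cases i; exact le_refl _
    | succ n ih =>
      rcases Nat.lt_or_ge i (n + 1) with h | h
      · have hn : n < k := by omega
        calc p ⟨i, lt_of_le_of_lt hij hj⟩ = p ⟨i, lt_of_le_of_lt (by omega) hn⟩ := rfl
          _ ≤ p ⟨n, hn⟩ := ih hn (by omega)
          _ ≤ p ⟨n + 1, hj⟩ := hmono ⟨n, hn⟩ hj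
      · have : i = n + 1 := by omega
        subst this; exact le_refl _
  have xlt : ∀ a b : ℕ, a < b → b ≤ μ + 1 → x a < x b := by
    intro a b hab hb
    induction b with
    | zero => omega
    | succ n ih =>
      rcases Nat.lt_or_ge a n with h | h
      · exact lt_trans (ih h (by omega)) (hx n (by omega))
      · have : a = n := by omega
        rw [this]; exact hx n (by omega)
  have xle : ∀ a b : ℕ, a ≤ b → b ≤ μ + 1 → x a ≤ x b := by
    intro a b h hb
    rcases eq_or_lt_of_le h with rfl | h
    · exact le_refl _
    · exact (xlt a b h hb).le
  -- equal components (not nec. consecutive) are even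
  have peq_even : ∀ i j : Fin k, i < j → p i = p j → Even (p i) := by
    intro i j hij hpe
    have h1 : (i : ℕ) + 1 < k := lt_of_le_of_lt (Nat.succ_le_of_lt hij) j.isLt
    have h2 : p i ≤ p ⟨(i : ℕ) + 1, h1⟩ := hmono i h1
    have h3 : p ⟨(i : ℕ) + 1, h1⟩ ≤ p j := by
      have := pmono ((i : ℕ) + 1) (j : ℕ) j.isLt (Nat.succ_le_of_lt hij)
      simpa using this
    exact heq i h1 (le_antisymm h2 (by omega))
  -- the fractions
  set frac : Fin k → ℝ := fun j => (((j : ℕ) : ℝ) + 1) / ((k : ℝ) + 1) with hfrac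
  have hkpos : (0 : ℝ) < (k : ℝ) + 1 := by positivity
  have frac_pos : ∀ j : Fin k, 0 < frac j := by
    intro j; apply div_pos (by positivity) hkpos
  have frac_lt_one : ∀ j : Fin k, frac j < 1 := by
    intro j
    rw [hfrac, div_lt_one hkpos]
    have : ((j : ℕ) : ℝ) < (k : ℝ) := Nat.cast_lt.mpr j.isLt
    simpa using by linarith
  have frac_mono : ∀ i j : Fin k, i < j → frac i < frac j := by
    intro i j hij
    have h : ((i : ℕ) : ℝ) < ((j : ℕ) : ℝ) := Nat.cast_lt.mpr hij
    rw [hfrac]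
    rw [div_lt_div_iff₀ hkpos hkpos]
    nlinarith
  set t : Fin k → ℝ := fun j =>
    if Even (p j) then x (p j / 2) + (x (p j / 2 + 1) - x (p j / 2)) * frac j
    else x ((p j + 1) / 2) with ht
  -- key pointwise facts
  have key_even : ∀ j : Fin k, Even (p j) → x (p j / 2) < t j ∧ t j < x (p j / 2 + 1) := by
    intro j hj
    have hd : x (p j / 2) < x (p j / 2 + 1) := by
      apply hx; have := hub j; omega
    rw [ht]; simp only [if_pos hj]
    constructor
    · nlinarith [frac_pos j]
    · nlinarith [frac_lt_one j, frac_pos j]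
  have key_odd : ∀ j : Fin k, Odd (p j) → t j = x ((p j + 1) / 2) := by
    intro j hj
    rw [ht]; simp only [Nat.odd_iff.mp hj]
    rw [if_neg (by simpa [Nat.even_iff] using Nat.odd_iff.mp hj)]
  refine ⟨t, ?_, ?_, fun j => ⟨key_odd j, key_even j⟩⟩
  · -- StrictMono
    intro i j hij
    have hple : p i ≤ p j := by
      have := pmono (i : ℕ) (j : ℕ) j.isLt (le_of_lt hij)
      simpa using this
    rcases eq_or_lt_of_le hple with hpe | hplt
    · -- equal: both even, same interval, frac increases
      have he : Even (p i) := peq_even i j hij hpe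
      have he' : Even (p j) := hpe ▸ he
      have hd : x (p i / 2) < x (p i / 2 + 1) := by
        apply hx; have := hub i; omega
      rw [ht]; simp only [if_pos he, if_pos he', ← hpe]
      have := frac_mono i j hij
      nlinarith
    · -- strictly less
      have hupi : t i ≤ x (p i / 2 + 1) := by
        rcases Nat.even_or_odd (p i) with h | h
        · exact (key_even i h).2.le
        · rw [key_odd i h]
          have : (p i + 1) / 2 = p i / 2 + 1 := by
            have := Nat.odd_iff.mp h; omega
          rw [this]
      have hlowj : x (p j / 2) < t j := by
        rcases Nat.even_or_odd (p j) with h | h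
        · exact (key_even j h).1
        · rw [key_odd j h]
          apply xlt
          · have := Nat.odd_iff.mp h; omega
          · have := hub j; omega
      rcases Nat.lt_or_ge (p i / 2 + 1) (p j / 2 + 1) with hc | hc
      · calc t i ≤ x (p i / 2 + 1) := hupi
          _ ≤ x (p j / 2) := xle _ _ (by omega) (by have := hub j; omega)
          _ < t j := hlowj
      · -- p i even, p j = p i + 1 odd
        have hpar : p i % 2 = 0 ∧ p j = p i + 1 := by omega
        have hei : Even (p i) := Nat.even_iff.mpr hpar.1
        have hoj : Odd (p j) := by rw [Nat.odd_iff]; omega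
        have := (key_even i hei).2
        rw [key_odd j hoj]
        have hh : (p j + 1) / 2 = p i / 2 + 1 := by omega
        rw [hh]; exact this
  · -- bounds
    intro j
    rcases Nat.even_or_odd (p j) with h | h
    · obtain ⟨h1, h2⟩ := key_even j h
      constructor
      · calc x 0 ≤ x (p j / 2) := xle _ _ (by omega) (by have := hub j; omega)
          _ < t j := h1
      · calc t j < x (p j / 2 + 1) := h2
          _ ≤ x (μ + 1) := xle _ _ (by have := hub j; omega) (le_refl _)
    · rw [key_odd j h]
      have ho := Nat.odd_iff.mp h
      have hb := hub j
      constructor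
      · exact xlt 0 _ (by omega) (by omega)
      · exact xlt _ (μ + 1) (by omega) (le_refl _)
end

section
/- Let k = ⌊μ/2⌋. Then the number of regular position vectors of length k for μ+2 data abscissae grows at least exponentially in μ: it is bounded below by C(μ, ⌊μ/2⌋), which is at least 2^μ/(μ+1). -/
/-- A regular position vector of length `k` for `μ+2` data abscissae. -/
def RegularPos (μ k : ℕ) (p : Fin k → ℕ) : Prop :=
  (∀ j, 1 ≤ p j ∧ p j ≤ 2 * μ - 1) ∧
  (∀ j i : Fin k, Even (p j) →
    (i < j → p i ≠ p j - 1) ∧ (j < i → p i ≠ p j + 1)) ∧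
  (∀ (j l : ℕ) (h : j + l + 1 < k),
    Even (p ⟨j, by omega⟩) → Even (p ⟨j + l + 1, h⟩) →
    (∀ m (_ : j < m) (hm : m < j + l + 1), Odd (p ⟨m, by omega⟩)) →
    p ⟨j, by omega⟩ / 2 + 2 + l ≤ p ⟨j + l + 1, h⟩ / 2) ∧
  (∀ (j : Fin k) (h : (j : ℕ) + 1 < k),
    (Even (p j) ∧ Even (p ⟨(j : ℕ) + 1, h⟩) → p j + 4 ≤ p ⟨(j : ℕ) + 1, h⟩) ∧
    (¬(Even (p j) ∧ Even (p ⟨(j : ℕ) + 1, h⟩)) → p j + 2 ≤ p ⟨(j : ℕ) + 1, h⟩))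

/-- for k = ⌊μ/2⌋, the number of regular position vectors of
length k grows at least exponentially in μ: it is at least C(μ, ⌊μ/2⌋), which
in turn is at least 2^μ/(μ+1). -/
theorem stmt6 (μ : ℕ) :
    2 ^ μ ≤ (μ + 1) * Nat.choose μ (μ / 2) ∧
    Nat.choose μ (μ / 2) ≤ {p : Fin (μ / 2) → ℕ | RegularPos μ (μ / 2) p}.ncard := by
  constructor
  · calc 2 ^ μ = ∑ i ∈ Finset.range (μ + 1), Nat.choose μ i := (Nat.sum_range_choose μ).symm
      _ ≤ ∑ _i ∈ Finset.range (μ + 1), Nat.choose μ (μ / 2) :=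
          Finset.sum_le_sum fun i _ => Nat.choose_le_middle i μ
      _ = (μ + 1) * Nat.choose μ (μ / 2) := by
          simp [Finset.sum_const, Finset.card_range]
  · set k := μ / 2 with hk
    set T := {p : Fin k → ℕ | RegularPos μ k p} with hT
    have hTfin : T.Finite := by
      apply Set.Finite.subset (Set.Finite.pi fun _ : Fin k => Set.finite_Iic (2 * μ))
      intro p hp
      simp only [Set.mem_pi, Set.mem_univ, Set.mem_Iic, forall_true_left]
      intro j
      have := hp.1 j
      omega
    haveI := hTfin.to_subtype
    set S := (Finset.range μ).powersetCard k with hS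
    have hcardS : S.card = Nat.choose μ k := by
      simp [hS, Finset.card_range]
    have hmem : ∀ (s : Finset ℕ) (hs : s ∈ S),
        (fun j => 2 * (s.orderEmbOfFin (Finset.mem_powersetCard.mp hs).2 j) + 1) ∈ T := by
      intro s hs
      obtain ⟨hsub, hcard⟩ := Finset.mem_powersetCard.mp hs
      set e := s.orderEmbOfFin hcard with he
      have hlt : ∀ j, e j < μ := by
        intro j
        have : e j ∈ s := Finset.orderEmbOfFin_mem s hcard j
        exact Finset.mem_range.mp (hsub this)
      have hodd : ∀ j : Fin k, ¬ Even (2 * e j + 1) := by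
        intro j h
        rw [Nat.even_iff] at h; omega
      refine ⟨fun j => ?_, ?_, ?_, ?_⟩
      · have := hlt j; dsimp only; omega
      · intro j i h; exact absurd h (hodd j)
      · intro j l h h1; exact absurd h1 (hodd _)
      · intro j h
        refine ⟨fun ⟨h1, _⟩ => absurd h1 (hodd _), fun _ => ?_⟩
        have : e j < e ⟨(j : ℕ) + 1, h⟩ := by
          apply e.strictMono
          exact Fin.mk_lt_mk.mpr (by omega)
        dsimp only
        omega
    let g : {s // s ∈ S} → ↥T := fun s =>
      ⟨fun j => 2 * (s.1.orderEmbOfFin (Finset.mem_powersetCard.mp s.2).2 j) + 1,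
        hmem s.1 s.2⟩
    have hginj : Function.Injective g := by
      rintro ⟨s1, hs1⟩ ⟨s2, hs2⟩ hgs
      have hfun := Subtype.ext_iff.mp hgs
      have heq : ∀ j, (s1.orderEmbOfFin (Finset.mem_powersetCard.mp hs1).2 j : ℕ) =
          s2.orderEmbOfFin (Finset.mem_powersetCard.mp hs2).2 j := by
        intro j
        have := congrFun hfun j
        simpa [g] using this
      have hr : (s1 : Set ℕ) = (s2 : Set ℕ) := by
        rw [← Finset.range_orderEmbOfFin s1 (Finset.mem_powersetCard.mp hs1).2,
          ← Finset.range_orderEmbOfFin s2 (Finset.mem_powersetCard.mp hs2).2]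
        ext x
        constructor
        · rintro ⟨j, rfl⟩; exact ⟨j, (heq j).symm⟩
        · rintro ⟨j, rfl⟩; exact ⟨j, heq j⟩
      exact Subtype.ext (Finset.coe_injective hr)
    calc Nat.choose μ k = S.card := hcardS.symm
      _ = Nat.card {s // s ∈ S} := by
          rw [Nat.card_eq_fintype_card, Fintype.card_coe]
      _ ≤ Nat.card ↥T := Nat.card_le_card_of_injective g hginj
      _ = T.ncard := (Nat.card_coe_set_eq T).symm
end

section
/- Best least-squares approximation by first-degree splines can preserve convexity in the following instance: for the data x_i = −1 + i/10, f_i = x_i², i = 0,…,20, there exists a best approximation from the set of continuous piecewise-linear functions with at most 5 free knots on [−1,1] that is a convex function. -/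
/-- `s` is affine on the set `I`. -/
def AffOn (s : ℝ → ℝ) (I : Set ℝ) : Prop := ∃ c d : ℝ, ∀ y ∈ I, s y = c * y + d

/-- `S¹_k[a,b]`: continuous piecewise-affine functions on `[a,b]` with at most
`k` free knots `a < t₁ < … < t_k < b`. -/
def Spline1 (k : ℕ) (a b : ℝ) : Set (ℝ → ℝ) :=
  {s | ∃ u : Fin (k + 2) → ℝ, u 0 = a ∧ u (Fin.last (k + 1)) = b ∧ StrictMono u ∧
    ContinuousOn s (Set.Icc a b) ∧
    ∀ j : Fin (k + 1), AffOn s (Set.Icc (u j.castSucc) (u j.succ))}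

/-! ### Auxiliary definitions: data, integer moments, DP table -/

/-- The data abscissae `x_i = -1 + i/10`. -/
noncomputable def Xr (i : ℕ) : ℝ := -1 + (i : ℝ) / 10

/-- Integer moments `∑_{i=k}^{l} (i-10)^r` (note `x_i = (i-10)/10`). -/
def Ms (r k l : ℕ) : ℤ := ∑ i ∈ Finset.Icc k l, ((i : ℤ) - 10) ^ r

def del (k l : ℕ) : ℤ := Ms 0 k l * Ms 2 k l - Ms 1 k l ^ 2
def Aq (k l : ℕ) : ℤ := Ms 0 k l * Ms 3 k l - Ms 1 k l * Ms 2 k l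
def Bq (k l : ℕ) : ℤ := Ms 2 k l ^ 2 - Ms 1 k l * Ms 3 k l
/-- `10^4 · del · (least–squares error of a line fit on points k..l)`. -/
def nume (k l : ℕ) : ℤ := Ms 4 k l * del k l - Ms 3 k l * Aq k l - Ms 2 k l * Bq k l

/-- Least-squares error of the best affine fit on data points `k..l`. -/
noncomputable def er (k l : ℕ) : ℝ :=
  if l ≤ k then 0 else (nume k l : ℝ) / (10000 * (del k l : ℝ))

/-- `15000 ·` (DP table of optimal errors: `G m n / 15000` is the least total error
fitting the first `n` data points by at most `m` affine pieces). -/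
def grow : ℕ → List ℤ
  | 0 => [0, 15000000, 15000000, 15000000, 15000000, 15000000, 15000000, 15000000, 15000000, 15000000, 15000000, 15000000, 15000000, 15000000, 15000000, 15000000, 15000000, 15000000, 15000000, 15000000, 15000000, 15000000]
  | 1 => [0, 0, 0, 1, 6, 21, 56, 126, 252, 462, 792, 1287, 2002, 3003, 4368, 6188, 8568, 11628, 15504, 20349, 26334, 33649]
  | 2 => [0, 0, 0, 0, 0, 1, 2, 7, 12, 27, 42, 77, 112, 182, 252, 378, 504, 714, 924, 1254, 1584, 2079]
  | 3 => [0, 0, 0, 0, 0, 0, 0, 1, 2, 3, 8, 13, 18, 33, 48, 63, 98, 133, 168, 238, 308, 378]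
  | 4 => [0, 0, 0, 0, 0, 0, 0, 0, 0, 1, 2, 3, 4, 9, 14, 19, 24, 39, 54, 69, 84, 119]
  | 5 => [0, 0, 0, 0, 0, 0, 0, 0, 0, 0, 0, 1, 2, 3, 4, 5, 10, 15, 20, 25, 30, 45]
  | _ => [0, 0, 0, 0, 0, 0, 0, 0, 0, 0, 0, 0, 0, 1, 2, 3, 4, 5, 6, 11, 16, 21]

def G (m n : ℕ) : ℤ := (grow m).getD n 0

/-! ### Decidable numeric facts -/

theorem D1 : ∀ j < 6, ∀ n < 22, ∀ k < 22, k + 1 < n →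
    10000 * del k (n-1) * G (j+1) n ≤ 10000 * del k (n-1) * G j k + 15000 * nume k (n-1) := by
  decide

theorem D2 : ∀ j < 6, ∀ k < 21, G (j+1) (k+1) ≤ G j k := by decide

theorem D3 : ∀ l < 21, ∀ k < l, 0 < del k l := by decide

theorem D4 : ∀ m' < 7, ∀ m < 7, m' ≤ m → ∀ n < 22, G m n ≤ G m' n := by decide

theorem D5 : ∀ m < 7, G m 0 = 0 := by decide

theorem D6 : G 6 21 = 21 := by decide

/-! ### The least-squares block bound -/

lemma ms_cast (k l r : ℕ) :
    ∑ i ∈ Finset.Icc k l, (Xr i) ^ r = (Ms r k l : ℝ) / 10 ^ r := by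
  rw [Ms]
  push_cast
  rw [Finset.sum_div]
  refine Finset.sum_congr rfl fun i _ => ?_
  rw [← div_pow]
  congr 1
  rw [Xr]; ring

lemma ms0_pos (k l : ℕ) (h : k ≤ l) : 0 < Ms 0 k l := by
  simp only [Ms, pow_zero, Finset.sum_const, Nat.card_Icc, nsmul_eq_mul, mul_one]
  have : 0 < l + 1 - k := by omega
  exact_mod_cast this

/-- Any affine function incurs at least error `er k l` on data points `k..l`. -/
lemma block (k l : ℕ) (hkl : k ≤ l) (hl : l < 21) (c d : ℝ) :
    er k l ≤ ∑ i ∈ Finset.Icc k l, ((Xr i) ^ 2 - (c * Xr i + d)) ^ 2 := by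
  rcases eq_or_lt_of_le hkl with h | h
  · subst h
    rw [er, if_pos le_rfl]
    positivity
  · have h1 : ∑ i ∈ Finset.Icc k l, ((Xr i) ^ 2 - (c * Xr i + d)) ^ 2
        = ∑ i ∈ Finset.Icc k l, ((Xr i)^4 - (2*c) * (Xr i)^3 + (c^2 - 2*d) * (Xr i)^2
            + (2*c*d) * (Xr i)^1 + d^2 * (Xr i)^0) :=
      Finset.sum_congr rfl fun i _ => by ring
    have hexp : ∑ i ∈ Finset.Icc k l, ((Xr i) ^ 2 - (c * Xr i + d)) ^ 2
        = (Ms 4 k l : ℝ) / 10 ^ 4 - (2*c) * ((Ms 3 k l : ℝ) / 10 ^ 3)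
          + (c^2 - 2*d) * ((Ms 2 k l : ℝ) / 10 ^ 2) + (2*c*d) * ((Ms 1 k l : ℝ) / 10 ^ 1)
          + d^2 * ((Ms 0 k l : ℝ) / 10 ^ 0) := by
      rw [h1]
      simp only [Finset.sum_add_distrib, Finset.sum_sub_distrib, ← Finset.mul_sum, ms_cast]
    have hd : (0:ℤ) < del k l := D3 l hl k h
    have hd' : (0:ℝ) < (del k l : ℝ) := by exact_mod_cast hd
    have hn' : (0:ℝ) < (Ms 0 k l : ℝ) := by exact_mod_cast ms0_pos k l hkl
    rw [er, if_neg (by omega), hexp, div_le_iff₀ (by positivity)]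
    set n := (Ms 0 k l : ℝ); set s1 := (Ms 1 k l : ℝ); set s2 := (Ms 2 k l : ℝ)
    set s3 := (Ms 3 k l : ℝ); set s4 := (Ms 4 k l : ℝ)
    have hdc : (del k l : ℝ) = n * s2 - s1 ^ 2 := by rw [del]; push_cast; ring
    have hnc : (nume k l : ℝ)
        = s4 * (n*s2 - s1^2) - s3 * (n*s3 - s1*s2) - s2 * (s2^2 - s1*s3) := by
      rw [nume, del, Aq, Bq]; push_cast; ring
    rw [hdc] at hd'
    rw [hnc, hdc]
    have hid : 10000 * n * (n*s2 - s1^2)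
          * (s4 / 10 ^ 4 - (2*c) * (s3 / 10 ^ 3) + (c^2 - 2*d) * (s2 / 10 ^ 2)
             + (2*c*d) * (s1 / 10 ^ 1) + d^2 * (n / 10 ^ 0))
          - n * (s4 * (n*s2 - s1^2) - s3 * (n*s3 - s1*s2) - s2 * (s2^2 - s1*s3))
        = (n*s2 - s1^2) * (10*s1*c + 100*n*d - s2)^2
          + (10*(n*s2 - s1^2)*c - (n*s3 - s1*s2))^2 := by ring
    nlinarith [hid, mul_nonneg hd'.le (sq_nonneg (10*s1*c + 100*n*d - s2)),
      sq_nonneg (10*(n*s2 - s1^2)*c - (n*s3 - s1*s2)), hn']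

/-! ### The DP lower bound -/

lemma er_step (j k nn : ℕ) (hj : j < 6) (hn : nn + 1 ≤ 21) (hk : k ≤ nn) :
    (G (j+1) (nn+1) : ℝ) / 15000 ≤ (G j k : ℝ) / 15000 + er k nn := by
  rcases eq_or_lt_of_le hk with h | h
  · subst h
    rw [er, if_pos le_rfl, add_zero, div_le_div_iff_of_pos_right (by norm_num)]
    exact_mod_cast D2 j hj k (by omega)
  · have hd : (0:ℤ) < del k nn := D3 nn (by omega) k h
    have hd' : (0:ℝ) < (del k nn : ℝ) := by exact_mod_cast hd
    have h1 := D1 j hj (nn+1) (by omega) k (by omega) (by omega)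
    rw [Nat.add_sub_cancel] at h1
    have h1' : 10000 * (del k nn : ℝ) * (G (j+1) (nn+1) : ℝ)
        ≤ 10000 * (del k nn : ℝ) * (G j k : ℝ) + 15000 * (nume k nn : ℝ) := by
      exact_mod_cast h1
    rw [er, if_neg (by omega)]
    rw [div_add_div _ _ (by norm_num : (15000:ℝ) ≠ 0) (by positivity),
      div_le_div_iff₀ (by norm_num) (by positivity)]
    nlinarith [h1', hd']

/-- Main lower bound: any values given on the first `n` data points by at most `m`
affine pieces (encoded via a monotone piece-assignment `p` and slopes/intercepts
`c`, `d`) incur total squared error at least `G m n / 15000`. -/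
lemma main_lb : ∀ n, n ≤ 21 → ∀ m, m ≤ 6 → ∀ (p : ℕ → ℕ) (c d : ℕ → ℝ),
    (∀ i i', i ≤ i' → i' < n → p i ≤ p i') → (∀ i, i < n → p i < m) →
    (G m n : ℝ) / 15000 ≤ ∑ i ∈ Finset.range n, ((Xr i) ^ 2 - (c (p i) * Xr i + d (p i))) ^ 2 := by
  intro n
  induction n using Nat.strong_induction_on with
  | _ n ih =>
    match n with
    | 0 =>
      intro _ m hm p c d _ _
      rw [D5 m (by omega), Finset.range_zero, Finset.sum_empty]
      norm_num
    | (nn+1) =>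
      intro hn m hm p c d hmono hlt
      have hjm : p nn < m := hlt nn (Nat.lt_succ_self nn)
      have hex : ∃ i, p nn ≤ p i := ⟨nn, le_rfl⟩
      set j := p nn with hjdef
      set k := Nat.find hex with hkdef
      have hk_spec : j ≤ p k := Nat.find_spec hex
      have hk_le : k ≤ nn := Nat.find_le le_rfl
      have hblock : ∀ i, k ≤ i → i ≤ nn → p i = j := by
        intro i h1i h2i
        refine le_antisymm ?_ (hk_spec.trans (hmono k i h1i (by omega)))
        exact hmono i nn h2i (Nat.lt_succ_self nn)
      have hpre : ∀ i, i < k → p i < j := by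
        intro i hik
        exact Nat.lt_of_not_le (Nat.find_min hex hik)
      have hsplit : ∑ i ∈ Finset.range (nn+1), ((Xr i) ^ 2 - (c (p i) * Xr i + d (p i))) ^ 2
          = (∑ i ∈ Finset.range k, ((Xr i) ^ 2 - (c (p i) * Xr i + d (p i))) ^ 2)
            + ∑ i ∈ Finset.Icc k nn, ((Xr i) ^ 2 - (c (p i) * Xr i + d (p i))) ^ 2 := by
        rw [← Finset.Ico_add_one_right_eq_Icc, Finset.sum_range_add_sum_Ico _ (by omega : k ≤ nn + 1)]
      have hblocksum : ∑ i ∈ Finset.Icc k nn, ((Xr i) ^ 2 - (c (p i) * Xr i + d (p i))) ^ 2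
          = ∑ i ∈ Finset.Icc k nn, ((Xr i) ^ 2 - (c j * Xr i + d j)) ^ 2 := by
        refine Finset.sum_congr rfl fun i hi => ?_
        rw [Finset.mem_Icc] at hi
        rw [hblock i hi.1 hi.2]
      have hb := block k nn hk_le (by omega) (c j) (d j)
      have hpre_sum := ih k (by omega) (by omega) j (by omega) p c d
        (fun i i' h1 h2 => hmono i i' h1 (by omega)) hpre
      have hstep := er_step j k nn (by omega) hn hk_le
      rw [hsplit, hblocksum]
      have hmn : (G m (nn+1) : ℝ) ≤ (G (j+1) (nn+1) : ℝ) := by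
        exact_mod_cast D4 (j+1) (by omega) m (by omega) (by omega) (nn+1) (by omega)
      have hmn' : (G m (nn+1) : ℝ)/15000 ≤ (G (j+1) (nn+1) : ℝ)/15000 := by linarith
      linarith

/-! ### The optimal convex spline: upper envelope of six lines -/

noncomputable def sstar : ℝ → ℝ := fun y =>
  ((((((-9/5) * y + (-241/300)) ⊔ ((-6/5) * y + (-53/150))) ⊔ ((-3/5) * y + (-1/12)))
    ⊔ ((1/10) * y + (1/100))) ⊔ ((9/10) * y + (-19/100))) ⊔ ((17/10) * y + (-71/100))

lemma reg0 (y : ℝ) (h1 : -1 ≤ y) (h2 : y ≤ -3/4) : sstar y = (-9/5) * y + (-241/300) := by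
  refine le_antisymm ?_ ?_
  · rw [sstar]
    simp only [sup_le_iff]
    refine ⟨⟨⟨⟨⟨?_, ?_⟩, ?_⟩, ?_⟩, ?_⟩, ?_⟩ <;> linarith
  · rw [sstar]
    exact le_sup_of_le_left (le_sup_of_le_left (le_sup_of_le_left (le_sup_of_le_left (le_sup_left))))

lemma reg1 (y : ℝ) (h1 : -3/4 ≤ y) (h2 : y ≤ -9/20) : sstar y = (-6/5) * y + (-53/150) := by
  refine le_antisymm ?_ ?_
  · rw [sstar]
    simp only [sup_le_iff]
    refine ⟨⟨⟨⟨⟨?_, ?_⟩, ?_⟩, ?_⟩, ?_⟩, ?_⟩ <;> linarith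
  · rw [sstar]
    exact le_sup_of_le_left (le_sup_of_le_left (le_sup_of_le_left (le_sup_of_le_left (le_sup_right))))

lemma reg2 (y : ℝ) (h1 : -9/20 ≤ y) (h2 : y ≤ -2/15) : sstar y = (-3/5) * y + (-1/12) := by
  refine le_antisymm ?_ ?_
  · rw [sstar]
    simp only [sup_le_iff]
    refine ⟨⟨⟨⟨⟨?_, ?_⟩, ?_⟩, ?_⟩, ?_⟩, ?_⟩ <;> linarith
  · rw [sstar]
    exact le_sup_of_le_left (le_sup_of_le_left (le_sup_of_le_left (le_sup_right)))

lemma reg3 (y : ℝ) (h1 : -2/15 ≤ y) (h2 : y ≤ 1/4) : sstar y = (1/10) * y + (1/100) := by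
  refine le_antisymm ?_ ?_
  · rw [sstar]
    simp only [sup_le_iff]
    refine ⟨⟨⟨⟨⟨?_, ?_⟩, ?_⟩, ?_⟩, ?_⟩, ?_⟩ <;> linarith
  · rw [sstar]
    exact le_sup_of_le_left (le_sup_of_le_left (le_sup_right))

lemma reg4 (y : ℝ) (h1 : 1/4 ≤ y) (h2 : y ≤ 13/20) : sstar y = (9/10) * y + (-19/100) := by
  refine le_antisymm ?_ ?_
  · rw [sstar]
    simp only [sup_le_iff]
    refine ⟨⟨⟨⟨⟨?_, ?_⟩, ?_⟩, ?_⟩, ?_⟩, ?_⟩ <;> linarith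
  · rw [sstar]
    exact le_sup_of_le_left (le_sup_right)

lemma reg5 (y : ℝ) (h1 : 13/20 ≤ y) (h2 : y ≤ 1) : sstar y = (17/10) * y + (-71/100) := by
  refine le_antisymm ?_ ?_
  · rw [sstar]
    simp only [sup_le_iff]
    refine ⟨⟨⟨⟨⟨?_, ?_⟩, ?_⟩, ?_⟩, ?_⟩, ?_⟩ <;> linarith
  · rw [sstar]
    exact le_sup_right

lemma line_convex (a b : ℝ) : ConvexOn ℝ (Set.Icc (-1:ℝ) 1) (fun y => a * y + b) := by
  refine ⟨convex_Icc _ _, fun x _ y _ s t hs ht hst => ?_⟩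
  simp only [smul_eq_mul]
  exact le_of_eq (by linear_combination (-b) * hst)

lemma sstar_convex : ConvexOn ℝ (Set.Icc (-1:ℝ) 1) sstar := by
  have h := ((((((line_convex (-9/5) (-241/300)).sup (line_convex (-6/5) (-53/150))).sup
    (line_convex (-3/5) (-1/12))).sup (line_convex (1/10) (1/100))).sup
    (line_convex (9/10) (-19/100))).sup (line_convex (17/10) (-71/100)))
  exact h

lemma sstar_mem : sstar ∈ Spline1 5 (-1 : ℝ) 1 := by
  refine ⟨![(-1 : ℝ), -3/4, -9/20, -2/15, 1/4, 13/20, 1], by norm_num, by norm_num [Fin.last],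
    ?_, ?_, ?_⟩
  · rw [Fin.strictMono_iff_lt_succ]
    intro i
    fin_cases i <;> simp <;> norm_num
  · apply Continuous.continuousOn
    unfold sstar
    fun_prop
  · intro j
    fin_cases j
    · exact ⟨-9/5, -241/300, fun y hy => by
        obtain ⟨a, b⟩ := hy
        norm_num at a b
        exact reg0 y (by linarith) (by linarith)⟩
    · exact ⟨-6/5, -53/150, fun y hy => by
        obtain ⟨a, b⟩ := hy
        simp at b
        norm_num at a b
        exact reg1 y (by linarith) (by linarith)⟩
    · exact ⟨-3/5, -1/12, fun y hy => by
        obtain ⟨a, b⟩ := hy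
        norm_num at a b
        exact reg2 y (by linarith) (by linarith)⟩
    · exact ⟨1/10, 1/100, fun y hy => by
        obtain ⟨a, b⟩ := hy
        norm_num at a b
        exact reg3 y (by linarith) (by linarith)⟩
    · exact ⟨9/10, -19/100, fun y hy => by
        obtain ⟨a, b⟩ := hy
        norm_num at a b
        exact reg4 y (by linarith) (by linarith)⟩
    · exact ⟨17/10, -71/100, fun y hy => by
        obtain ⟨a, b⟩ := hy
        norm_num at a b
        exact reg5 y (by linarith) (by linarith)⟩

lemma sstar_val :
    ∑ i ∈ Finset.range 21, ((-1 + (i : ℝ) / 10) ^ 2 - sstar (-1 + (i : ℝ) / 10)) ^ 2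
      = 21 / 15000 := by
  norm_num [Finset.sum_range_succ, reg0, reg1, reg2, reg3, reg4, reg5]

/-! ### The theorem -/

/-- for the convex data x_i = −1 + i/10, f_i = x_i², i = 0,…,20,
there is a best least-squares approximation from S¹₅[−1,1] that is convex. -/
theorem stmt9 :
    ∃ s ∈ Spline1 5 (-1 : ℝ) 1,
      (∀ s' ∈ Spline1 5 (-1 : ℝ) 1,
        ∑ i ∈ Finset.range 21,
            ((-1 + (i : ℝ) / 10) ^ 2 - s (-1 + (i : ℝ) / 10)) ^ 2 ≤
        ∑ i ∈ Finset.range 21,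
            ((-1 + (i : ℝ) / 10) ^ 2 - s' (-1 + (i : ℝ) / 10)) ^ 2) ∧
      ConvexOn ℝ (Set.Icc (-1 : ℝ) 1) s := by
  classical
  refine ⟨sstar, sstar_mem, ?_, sstar_convex⟩
  intro s' hs'
  rw [sstar_val]
  obtain ⟨u, hu0, hu6, humono, _, haff⟩ := hs'
  choose C D hCD using haff
  set Un : ℕ → ℝ := fun t => u ⟨min t 6, by omega⟩ with hUn
  set Cn : ℕ → ℝ := fun t => if h : t < 6 then C ⟨t, h⟩ else 0 with hCn
  set Dn : ℕ → ℝ := fun t => if h : t < 6 then D ⟨t, h⟩ else 0 with hDn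
  set p : ℕ → ℕ := fun i => Nat.findGreatest (fun t => Un t ≤ Xr i) 5 with hp
  have hXr : ∀ i : ℕ, Xr i = -1 + (i : ℝ) / 10 := fun i => rfl
  have hXmono : ∀ i i' : ℕ, i ≤ i' → Xr i ≤ Xr i' := by
    intro i i' h
    rw [hXr, hXr]
    have : (i : ℝ) ≤ (i' : ℝ) := by exact_mod_cast h
    linarith
  have hUn0 : Un 0 = -1 := by
    rw [hUn]
    simpa using hu0
  have hUn6 : Un 6 = 1 := by
    rw [hUn]
    simpa [Fin.last] using hu6
  have hX0 : ∀ i : ℕ, -1 ≤ Xr i := by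
    intro i
    rw [hXr]
    have : (0:ℝ) ≤ (i : ℝ) := by positivity
    linarith
  have hX1 : ∀ i : ℕ, i ≤ 20 → Xr i ≤ 1 := by
    intro i hi
    rw [hXr]
    have : (i : ℝ) ≤ 20 := by exact_mod_cast hi
    linarith
  have hP0 : ∀ i : ℕ, Un 0 ≤ Xr i := by
    intro i; rw [hUn0]; exact hX0 i
  have hp5 : ∀ i : ℕ, p i ≤ 5 := by
    intro i; rw [hp]; exact Nat.findGreatest_le 5
  have hplb : ∀ i : ℕ, Un (p i) ≤ Xr i := by
    intro i
    have h := Nat.findGreatest_spec (P := fun t => Un t ≤ Xr i) (Nat.zero_le 5) (hP0 i)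
    rw [hp]
    exact h
  have hpub : ∀ i : ℕ, i ≤ 20 → Xr i ≤ Un (p i + 1) := by
    intro i hi
    rcases eq_or_lt_of_le (hp5 i) with h | h
    · rw [h, hUn6]
      exact hX1 i hi
    · have hfg : Nat.findGreatest (fun t => Un t ≤ Xr i) 5 = p i := by rw [hp]
      have hgr := Nat.findGreatest_is_greatest (P := fun t => Un t ≤ Xr i) (n := 5)
        (k := p i + 1) (by rw [hfg]; omega) (by omega)
      exact le_of_not_ge hgr
  have hpmono : ∀ i i' : ℕ, i ≤ i' → p i ≤ p i' := by
    intro i i' h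
    by_contra hcon
    push_neg at hcon
    have hfg : Nat.findGreatest (fun t => Un t ≤ Xr i') 5 = p i' := by rw [hp]
    have hgr := Nat.findGreatest_is_greatest (P := fun t => Un t ≤ Xr i') (n := 5)
      (k := p i) (by rw [hfg]; omega) (hp5 i)
    exact hgr ((hplb i).trans (hXmono i i' h))
  have hs'val : ∀ i : ℕ, i ≤ 20 → s' (Xr i) = Cn (p i) * Xr i + Dn (p i) := by
    intro i hi
    have hlt6 : p i < 6 := by have := hp5 i; omega
    have hcs : (⟨p i, hlt6⟩ : Fin 6).castSucc = (⟨min (p i) 6, by omega⟩ : Fin 7) := by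
      apply Fin.ext
      simp [Fin.castSucc]
      omega
    have hsu : (⟨p i, hlt6⟩ : Fin 6).succ = (⟨min (p i + 1) 6, by omega⟩ : Fin 7) := by
      apply Fin.ext
      simp [Fin.succ]
      omega
    have hmem : Xr i ∈ Set.Icc (u (⟨p i, hlt6⟩ : Fin 6).castSucc) (u (⟨p i, hlt6⟩ : Fin 6).succ) := by
      rw [hcs, hsu]
      exact ⟨hplb i, hpub i hi⟩
    have := hCD ⟨p i, hlt6⟩ (Xr i) hmem
    rw [this, hCn, hDn]
    simp [hlt6]
  have hmain := main_lb 21 le_rfl 6 le_rfl p Cn Dn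
    (fun i i' h _ => hpmono i i' h) (fun i hi => by have := hp5 i; omega)
  rw [D6] at hmain
  push_cast at hmain
  refine hmain.trans (le_of_eq ?_)
  refine Finset.sum_congr rfl fun i hi => ?_
  rw [Finset.mem_range] at hi
  rw [← hXr i, hs'val i (by omega)]
end

section
/- Perturbation lemma for strict improvement: let s* be continuous piecewise-affine on [a,b] with an interior knot t ∈ (x_q, x_{q+1}) for some q, and suppose on the segment of data abscissae to the left of t there is an affine function s₀ with Σ_{x_i ≤ x_q} (f_i − s₀(x_i))² < Σ_{x_i ≤ x_q} (f_i − s*(x_i))². Then for sufficiently small λ ∈ (0,1], the function obtained from s* by replacing it on (−∞, t_λ] by (1−λ)s* + λ s₀ (where t_λ ∈ (x_q, x_{q+1}) is the intersection of (1−λ)s* + λ s₀ with the branch of s* to the right of t, assumed to exist for small λ because s* has a jump in slope at t) has strictly smaller total sum of squared errors than s*, while its values at all data abscissae x_i > x_q are unchanged. -/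
/-- perturbation lemma. If an affine function `s₀` beats `s*` in
the least-squares sense on the segment of abscissae left of a proper interior
knot `t ∈ (x q, x (q+1))`, then for all sufficiently small `λ ∈ (0,1]` the
spline obtained by replacing `s*` on `(−∞, t_λ]` by `(1−λ)s* + λs₀` (where
`t_λ ∈ (x q, x (q+1))`, `t_λ ≥ t`, is an intersection point with the right
branch of `s*`, assumed to exist) has strictly smaller total squared error,
while its values at all abscissae `x i` with `i > q` are unchanged. -/
theorem stmt16 (μ q : ℕ) (hq : q ≤ μ) (x f : ℕ → ℝ)
    (hx : ∀ i, i ≤ μ → x i < x (i + 1))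
    (sstar : ℝ → ℝ) (t : ℝ) (ht1 : x q < t) (ht2 : t < x (q + 1))
    (aL bL aR bR : ℝ) (hslope : aL ≠ aR)
    (hLaff : ∀ y ∈ Set.Icc (x q) t, sstar y = aL * y + bL)
    (hRaff : ∀ y ∈ Set.Icc t (x (q + 1)), sstar y = aR * y + bR)
    (a0 b0 : ℝ)
    (hbetter : ∑ i ∈ Finset.range (q + 1), (f i - (a0 * x i + b0)) ^ 2 <
               ∑ i ∈ Finset.range (q + 1), (f i - sstar (x i)) ^ 2) :
    ∃ lam0 : ℝ, 0 < lam0 ∧ lam0 ≤ 1 ∧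
      ∀ lam : ℝ, 0 < lam → lam ≤ lam0 →
        ∀ tlam : ℝ, x q < tlam → tlam < x (q + 1) → t ≤ tlam →
          ((1 - lam) * sstar tlam + lam * (a0 * tlam + b0) = sstar tlam) →
          ∀ g : ℝ → ℝ,
            (∀ y, y ≤ tlam → g y = (1 - lam) * sstar y + lam * (a0 * y + b0)) →
            (∀ y, tlam < y → g y = sstar y) →
            (∑ i ∈ Finset.range (μ + 2), (f i - g (x i)) ^ 2 <
             ∑ i ∈ Finset.range (μ + 2), (f i - sstar (x i)) ^ 2) ∧
            (∀ i, q < i → i ≤ μ + 1 → g (x i) = sstar (x i)) := by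
  -- monotonicity of `x` on `{0,…,μ+1}`
  have hmono : ∀ i j : ℕ, i ≤ j → j ≤ μ + 1 → x i ≤ x j := by
    intro i j hij hj
    induction j with
    | zero =>
      have : i = 0 := by omega
      simp [this]
    | succ n ih =>
      rcases Nat.lt_or_ge i (n + 1) with h | h
      · have h1 : x i ≤ x n := ih (by omega) (by omega)
        have h2 : x n < x (n + 1) := hx n (by omega)
        linarith
      · have : i = n + 1 := by omega
        simp [this]
  refine ⟨1, one_pos, le_refl 1, ?_⟩
  intro lam hlam hlam1 tlam htl1 htl2 htl3 _hint g hg1 hg2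
  have hunch : ∀ i, q < i → i ≤ μ + 1 → g (x i) = sstar (x i) := by
    intro i h1 h2
    have hx1 : x (q + 1) ≤ x i := hmono (q + 1) i (by omega) h2
    exact hg2 _ (lt_of_lt_of_le htl2 hx1)
  refine ⟨?_, hunch⟩
  have hsplit : ∀ h : ℕ → ℝ, ∑ i ∈ Finset.range (μ + 2), h i
      = ∑ i ∈ Finset.range (q + 1), h i + ∑ i ∈ Finset.Ico (q + 1) (μ + 2), h i := by
    intro h
    rw [Finset.range_eq_Ico, Finset.range_eq_Ico]
    exact (Finset.sum_Ico_consecutive h (m := 0) (n := q + 1) (k := μ + 2) (Nat.zero_le _) (by omega)).symm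
  rw [hsplit (fun i => (f i - g (x i)) ^ 2), hsplit (fun i => (f i - sstar (x i)) ^ 2)]
  have htail : ∑ i ∈ Finset.Ico (q + 1) (μ + 2), (f i - g (x i)) ^ 2
      = ∑ i ∈ Finset.Ico (q + 1) (μ + 2), (f i - sstar (x i)) ^ 2 := by
    refine Finset.sum_congr rfl fun i hi => ?_
    rw [Finset.mem_Ico] at hi
    rw [hunch i (by omega) (by omega)]
  rw [htail]
  have hhead : ∑ i ∈ Finset.range (q + 1), (f i - g (x i)) ^ 2
      < ∑ i ∈ Finset.range (q + 1), (f i - sstar (x i)) ^ 2 := by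
    have hgval : ∀ i ∈ Finset.range (q + 1),
        (f i - g (x i)) ^ 2
          = ((1 - lam) * (f i - sstar (x i)) + lam * (f i - (a0 * x i + b0))) ^ 2 := by
      intro i hi
      rw [Finset.mem_range] at hi
      have hxi : x i ≤ x q := hmono i q (by omega) (by omega)
      rw [hg1 _ (le_of_lt (lt_of_le_of_lt hxi htl1))]
      ring
    rw [Finset.sum_congr rfl hgval]
    have hconv : ∀ i ∈ Finset.range (q + 1),
        ((1 - lam) * (f i - sstar (x i)) + lam * (f i - (a0 * x i + b0))) ^ 2
          ≤ (1 - lam) * (f i - sstar (x i)) ^ 2 + lam * (f i - (a0 * x i + b0)) ^ 2 := by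
      intro i _
      nlinarith [sq_nonneg ((f i - sstar (x i)) - (f i - (a0 * x i + b0))),
        mul_nonneg (mul_nonneg hlam.le (by linarith : (0:ℝ) ≤ 1 - lam))
          (sq_nonneg ((f i - sstar (x i)) - (f i - (a0 * x i + b0))))]
    have h1 := Finset.sum_le_sum hconv
    have h2 : ∑ i ∈ Finset.range (q + 1),
        ((1 - lam) * (f i - sstar (x i)) ^ 2 + lam * (f i - (a0 * x i + b0)) ^ 2)
        = (1 - lam) * ∑ i ∈ Finset.range (q + 1), (f i - sstar (x i)) ^ 2
          + lam * ∑ i ∈ Finset.range (q + 1), (f i - (a0 * x i + b0)) ^ 2 := by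
      rw [Finset.sum_add_distrib, Finset.mul_sum, Finset.mul_sum]
    rw [h2] at h1
    nlinarith
  linarith
end
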